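/- (Perfect packing of the instance constructed in the reduction from binary separation.) Let n = n₁ + n₂ with n₁, n₂ ∈ ℕ, let 0 < δ < 1/2, and let a : Fin n → ℝ satisfy δ < a i < 1/2 for all i. Let Lg ⊆ Fin n with |Lg| = n₁ (the indices of the large items). Consider the collection of 2n item weights consisting of: n₁ items of weight 1/2 + δ (phase 1); for each i ∈ Fin n, one item of weight 1/2 − a i (phase 2); and for each i ∉ Lg, one item of weight 1/2 + a i (phase 3). Then all 2n items can be packed into n unit-capacity bins: each phase-1 item is paired with a phase-2 item whose index lies in Lg, and each remaining phase-2 item is paired with its complementary phase-3 item. -/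

import Mathlib

theorem reduction_perfect_packing
    (n₁ n₂ n : ℕ) (hn : n = n₁ + n₂)
    (δ : ℝ) (hδ0 : 0 < δ) (hδ1 : δ < 1/2)
    (a : Fin n → ℝ) (ha : ∀ i, δ < a i ∧ a i < 1/2)
    (Lg : Finset (Fin n)) (hLg : Lg.card = n₁) :
    -- the items: `n₁` phase-1 items of weight `1/2 + δ`, for each `i` a
    -- phase-2 item of weight `1/2 - a i`, and for each small index `i ∉ Lg`
    -- a complementary phase-3 item of weight `1/2 + a i`
    ∃ p : (Fin n₁ ⊕ Fin n ⊕ {i : Fin n // i ∉ Lg}) → Fin n,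
      ∀ j : Fin n,
        ∑ x ∈ Finset.univ.filter (fun x => p x = j),
          Sum.elim (fun _ => 1/2 + δ)
            (Sum.elim (fun i => 1/2 - a i) (fun i => 1/2 + a i.val)) x ≤ 1 := by
  classical
  set e := Lg.orderIsoOfFin hLg with he
  refine ⟨Sum.elim (fun k => (e k : Fin n)) (Sum.elim id (fun i => i.val)), ?_⟩
  intro j
  rw [Finset.sum_filter, Fintype.sum_sum_type, Fintype.sum_sum_type]
  simp only [Sum.elim_inl, Sum.elim_inr, id]
  have h2 : ∑ i : Fin n, (if i = j then (1/2 - a i : ℝ) else 0) = 1/2 - a j := by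
    rw [Finset.sum_ite_eq' Finset.univ j (fun i => (1/2 - a i : ℝ))]
    simp
  by_cases hj : j ∈ Lg
  · have h1 : ∑ k : Fin n₁, (if (e k : Fin n) = j then (1/2 + δ : ℝ) else 0)
        = 1/2 + δ := by
      refine Finset.sum_eq_single_of_mem (e.symm ⟨j, hj⟩) (Finset.mem_univ _) ?_ |>.trans ?_
      · intro k _ hk
        rw [if_neg]
        intro h
        have h' : e k = ⟨j, hj⟩ := Subtype.ext h
        exact hk (by rw [← h']; simp)
      · simp
    have h3 : ∑ i : {i : Fin n // i ∉ Lg}, (if i.val = j then (1/2 + a i.val : ℝ) else 0) = 0 := by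
      apply Finset.sum_eq_zero
      intro x _
      rw [if_neg]
      intro h
      exact x.2 (h ▸ hj)
    refine (show _ = (1/2 + δ) + ((1/2 - a j) + 0) from congrArg₂ (· + ·) h1 (congrArg₂ (· + ·) h2 h3)).trans_le ?_
    have := (ha j).1
    linarith
  · have h1 : ∑ k : Fin n₁, (if (e k : Fin n) = j then (1/2 + δ : ℝ) else 0) = 0 := by
      apply Finset.sum_eq_zero
      intro k _
      rw [if_neg]
      intro h
      exact hj (h ▸ (e k).2)
    have h3 : ∑ i : {i : Fin n // i ∉ Lg}, (if i.val = j then (1/2 + a i.val : ℝ) else 0)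
        = 1/2 + a j := by
      refine Finset.sum_eq_single_of_mem ⟨j, hj⟩ (Finset.mem_univ _) ?_ |>.trans ?_
      · intro x _ hx
        rw [if_neg]
        intro h
        exact hx (Subtype.ext h)
      · simp
    refine (show _ = 0 + ((1/2 - a j) + (1/2 + a j)) from congrArg₂ (· + ·) h1 (congrArg₂ (· + ·) h2 h3)).trans_le ?_
    linarith
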